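/- Let $G(r,t) = (4\pi t)^{-3/2} e^{-t} \frac{r}{\sinh r} e^{-r^2/(4t)}$ and $E_1(s,t) = (4\pi t)^{-1/2} e^{-s^2/(4t)}$. Then $\int_0^\infty \big|\, 4\pi (\sinh r)^2\, G(r,t) - E_1(r - 2t,\, t) \,\big|\, dr \to 0$ as $t \to \infty$. -/

import Mathlib

open Real Filter MeasureTheory

/-- The fundamental solution of the heat equation on `ℍ³` in geodesic polar
coordinates: `G(r,t) = (4πt)^(-3/2) e^{-t} (r / sinh r) e^{-r²/(4t)}`. -/
noncomputable def hypHeatKernel (r t : ℝ) : ℝ :=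
  (4 * π * t) ^ (-(3 : ℝ) / 2) * Real.exp (-t) * (r / Real.sinh r) *
    Real.exp (-r ^ 2 / (4 * t))

/-- The one-dimensional Gaussian heat kernel `E₁(s,t) = (4πt)^(-1/2) e^{-s²/(4t)}`. -/
noncomputable def gaussKernel1D (s t : ℝ) : ℝ :=
  (4 * π * t) ^ (-(1 : ℝ) / 2) * Real.exp (-s ^ 2 / (4 * t))

/-- `∫ x in Ioi 0, x e^{-b x²} = (2b)⁻¹`. -/
lemma aux_integral_Ioi_mul_exp_neg_mul_sq {b : ℝ} (hb : 0 < b) :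
    ∫ x in Set.Ioi (0 : ℝ), x * Real.exp (-b * x ^ 2) = (2 * b)⁻¹ := by
  have hb' : (2 : ℝ) * b ≠ 0 := by positivity
  have A : ∀ x : ℝ, HasDerivAt (fun y => -(2 * b)⁻¹ * Real.exp (-b * y ^ 2))
      (x * Real.exp (-b * x ^ 2)) x := by
    intro x
    convert (((hasDerivAt_pow 2 x).const_mul (-b)).exp.const_mul (-(2 * b)⁻¹)) using 1
    · rfl
    · rfl
    field_simp
    ring
  have B : Tendsto (fun y : ℝ => -(2 * b)⁻¹ * Real.exp (-b * y ^ 2)) atTop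
      (nhds (-(2 * b)⁻¹ * 0)) := by
    refine Tendsto.const_mul _ ?_
    apply Real.tendsto_exp_atBot.comp
    exact (tendsto_pow_atTop two_ne_zero).const_mul_atTop_of_neg (neg_lt_zero.2 hb)
  have := integral_Ioi_of_hasDerivAt_of_tendsto' (a := 0)
    (f := fun y => -(2 * b)⁻¹ * Real.exp (-b * y ^ 2))
    (f' := fun x => x * Real.exp (-b * x ^ 2))
    (fun x _ => A x) (integrable_mul_exp_neg_mul_sq hb).integrableOn B
  simpa using this

/-- `∫ x, |x| e^{-b x²} = b⁻¹`. -/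
lemma aux_integral_abs_mul_exp_neg_mul_sq {b : ℝ} (hb : 0 < b) :
    ∫ x : ℝ, |x| * Real.exp (-b * x ^ 2) = b⁻¹ := by
  have h : ∀ x : ℝ, |x| * Real.exp (-b * x ^ 2) = |x| * Real.exp (-b * |x| ^ 2) := by
    intro x; rw [sq_abs]
  rw [funext h, integral_comp_abs (f := fun x => x * Real.exp (-b * x ^ 2)),
    aux_integral_Ioi_mul_exp_neg_mul_sq hb]
  rw [mul_inv]
  field_simp

lemma aux_integrable_abs_mul_exp {b : ℝ} (hb : 0 < b) :
    Integrable (fun x : ℝ => |x| * Real.exp (-b * x ^ 2)) := by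
  have := (integrable_mul_exp_neg_mul_sq hb).abs
  simpa [abs_mul, abs_of_pos (Real.exp_pos _)] using this

/-- The key algebraic identity. -/
lemma aux_key (t r : ℝ) (ht : 0 < t) (hr : 0 < r) :
    4 * π * (Real.sinh r) ^ 2 * hypHeatKernel r t - gaussKernel1D (r - 2 * t) t
      = (4 * π * t) ^ (-(1 : ℝ) / 2) *
        (((r - 2 * t) / (2 * t)) * Real.exp (-(r - 2 * t) ^ 2 / (4 * t))
          - (r / (2 * t)) * Real.exp (-(r + 2 * t) ^ 2 / (4 * t))) := by
  have h4πt : (0 : ℝ) < 4 * π * t := by positivity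
  have htne : t ≠ 0 := ne_of_gt ht
  have hπ : (π : ℝ) ≠ 0 := Real.pi_ne_zero
  have hsinh : Real.exp r - Real.exp (-r) ≠ 0 := by
    have h1 : Real.exp (-r) < Real.exp r := Real.exp_lt_exp.2 (by linarith)
    linarith
  have hrpow : (4 * π * t) ^ (-(3 : ℝ) / 2)
      = (4 * π * t) ^ (-(1 : ℝ) / 2) * (4 * π * t)⁻¹ := by
    rw [← Real.rpow_neg_one, ← Real.rpow_add h4πt]
    norm_num
  have e1 : Real.exp (-t) * Real.exp (-r ^ 2 / (4 * t)) * Real.exp r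
      = Real.exp (-(r - 2 * t) ^ 2 / (4 * t)) := by
    rw [← Real.exp_add, ← Real.exp_add]
    congr 1
    field_simp
    ring
  have e2 : Real.exp (-t) * Real.exp (-r ^ 2 / (4 * t)) * Real.exp (-r)
      = Real.exp (-(r + 2 * t) ^ 2 / (4 * t)) := by
    rw [← Real.exp_add, ← Real.exp_add]
    congr 1
    field_simp
    ring
  rw [hypHeatKernel, gaussKernel1D, hrpow, Real.sinh_eq, ← e1, ← e2]
  field_simp
  ring

/-- After subtracting the drift `r = 2t`, the radial mass density of the hyperbolic heat
kernel on `ℍ³` converges in `L¹` to the 1D Euclidean heat kernel. -/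
theorem hypHeatKernel_density_L1_convergence :
    Tendsto (fun t : ℝ =>
        ∫ r in Set.Ioi (0 : ℝ),
          |4 * π * (Real.sinh r) ^ 2 * hypHeatKernel r t - gaussKernel1D (r - 2 * t) t|)
      atTop (nhds 0) := by
  have hbound : Tendsto (fun t : ℝ => 2 * (4 * π * t) ^ (-(1 : ℝ) / 2) * (1 + Real.exp (-t)))
      atTop (nhds 0) := by
    have h0 : Tendsto (fun t : ℝ => 4 * π * t) atTop atTop := by
      apply Tendsto.const_mul_atTop (by positivity : (0:ℝ) < 4 * π) tendsto_id
    have h1 : Tendsto (fun t : ℝ => (4 * π * t) ^ (-(1 : ℝ) / 2)) atTop (nhds 0) := by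
      have h2 := (tendsto_rpow_neg_atTop (y := 1 / 2) (by norm_num)).comp h0
      simpa [Function.comp_def, neg_div] using h2
    have h3 : Tendsto (fun t : ℝ => 1 + Real.exp (-t)) atTop (nhds (1 + 0)) :=
      tendsto_const_nhds.add Real.tendsto_exp_neg_atTop_nhds_zero
    have := (h1.const_mul 2).mul h3
    simpa using this
  refine squeeze_zero' (Eventually.of_forall fun t =>
    setIntegral_nonneg measurableSet_Ioi fun r _ => abs_nonneg _) ?_ hbound
  filter_upwards [eventually_gt_atTop (0 : ℝ)] with t ht
  -- notation
  set b : ℝ := (4 * t)⁻¹ with hb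
  have hb0 : 0 < b := by rw [hb]; positivity
  have hform : ∀ x : ℝ, -x ^ 2 / (4 * t) = -b * x ^ 2 := by
    intro x
    rw [hb, neg_div, div_eq_inv_mul, neg_mul]
  have hE0 : (0 : ℝ) < (4 * π * t) ^ (-(1 : ℝ) / 2) :=
    Real.rpow_pos_of_pos (by positivity) _
  have h2t : (0 : ℝ) < 2 * t := by linarith
  set E : ℝ := (4 * π * t) ^ (-(1 : ℝ) / 2) with hE
  set C : ℝ := E / (2 * t) with hC
  have hC0 : 0 ≤ C := by
    rw [hC]
    positivity
  set F : ℝ → ℝ := fun r =>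
    C * (|r - 2 * t| * Real.exp (-(r - 2 * t) ^ 2 / (4 * t))
      + Real.exp (-t) * (|r| * Real.exp (-r ^ 2 / (4 * t)))) with hF
  -- integrability of F
  have hint0 : Integrable (fun x : ℝ => |x| * Real.exp (-x ^ 2 / (4 * t))) := by
    simp only [hform]
    exact aux_integrable_abs_mul_exp hb0
  have hint1 : Integrable (fun x : ℝ => |x - 2 * t| * Real.exp (-(x - 2 * t) ^ 2 / (4 * t))) :=
    hint0.comp_sub_right (2 * t)
  have hintF : Integrable F := ((hint1.add (hint0.const_mul (Real.exp (-t)))).const_mul C)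
  have hFnonneg : ∀ r : ℝ, 0 ≤ F r := by
    intro r
    apply mul_nonneg hC0
    positivity
  -- pointwise bound
  have hpt : ∀ r ∈ Set.Ioi (0 : ℝ),
      |4 * π * (Real.sinh r) ^ 2 * hypHeatKernel r t - gaussKernel1D (r - 2 * t) t| ≤ F r := by
    intro r hr
    rw [Set.mem_Ioi] at hr
    rw [aux_key t r ht hr]
    set A : ℝ := ((r - 2 * t) / (2 * t)) * Real.exp (-(r - 2 * t) ^ 2 / (4 * t)) with hA
    set B : ℝ := (r / (2 * t)) * Real.exp (-(r + 2 * t) ^ 2 / (4 * t)) with hB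
    have hAabs : |A| = |r - 2 * t| / (2 * t) * Real.exp (-(r - 2 * t) ^ 2 / (4 * t)) := by
      rw [hA, abs_mul, abs_of_pos (Real.exp_pos _), abs_div, abs_of_pos h2t]
    have hexp_le : Real.exp (-(r + 2 * t) ^ 2 / (4 * t))
        ≤ Real.exp (-t) * Real.exp (-r ^ 2 / (4 * t)) := by
      rw [← Real.exp_add]
      apply Real.exp_le_exp.2
      have heq : -t + -r ^ 2 / (4 * t) = -(r + 2 * t) ^ 2 / (4 * t) + r := by
        field_simp
        ring
      rw [heq]
      linarith
    have hBabs : |B| ≤ r / (2 * t) * (Real.exp (-t) * Real.exp (-r ^ 2 / (4 * t))) := by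
      rw [hB, abs_mul, abs_of_pos (Real.exp_pos _), abs_div, abs_of_pos h2t, abs_of_pos hr]
      exact mul_le_mul_of_nonneg_left hexp_le (by positivity)
    calc |E * (A - B)| = E * |A - B| := by rw [abs_mul, abs_of_pos hE0]
      _ ≤ E * (|A| + |B|) := mul_le_mul_of_nonneg_left (abs_sub A B) hE0.le
      _ ≤ E * (|r - 2 * t| / (2 * t) * Real.exp (-(r - 2 * t) ^ 2 / (4 * t))
            + r / (2 * t) * (Real.exp (-t) * Real.exp (-r ^ 2 / (4 * t)))) := by
          apply mul_le_mul_of_nonneg_left _ hE0.le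
          rw [hAabs]
          exact add_le_add_right hBabs _
      _ = F r := by
          simp only [hF, hC, abs_of_pos hr]
          field_simp
  -- integral computation
  have hI0 : ∫ x : ℝ, |x| * Real.exp (-x ^ 2 / (4 * t)) = 4 * t := by
    simp only [hform]
    rw [aux_integral_abs_mul_exp_neg_mul_sq hb0, hb, inv_inv]
  have hI1 : ∫ x : ℝ, |x - 2 * t| * Real.exp (-(x - 2 * t) ^ 2 / (4 * t)) = 4 * t := by
    rw [integral_sub_right_eq_self (fun x : ℝ => |x| * Real.exp (-x ^ 2 / (4 * t))) (2 * t)]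
    exact hI0
  have hIF : ∫ r : ℝ, F r = C * (4 * t + Real.exp (-t) * (4 * t)) := by
    simp only [hF]
    rw [MeasureTheory.integral_const_mul, integral_add hint1 (hint0.const_mul (Real.exp (-t))),
      MeasureTheory.integral_const_mul, hI0, hI1]
  calc ∫ r in Set.Ioi (0 : ℝ),
        |4 * π * (Real.sinh r) ^ 2 * hypHeatKernel r t - gaussKernel1D (r - 2 * t) t|
      ≤ ∫ r in Set.Ioi (0 : ℝ), F r := by
        apply integral_mono_of_nonneg (Eventually.of_forall fun r => abs_nonneg _)
          hintF.integrableOn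
        exact (ae_restrict_iff' measurableSet_Ioi).2 (Eventually.of_forall hpt)
    _ ≤ ∫ r : ℝ, F r :=
        setIntegral_le_integral hintF (Eventually.of_forall hFnonneg)
    _ = C * (4 * t + Real.exp (-t) * (4 * t)) := hIF
    _ = 2 * (4 * π * t) ^ (-(1 : ℝ) / 2) * (1 + Real.exp (-t)) := by
        rw [hC, hE]
        field_simp
        ring
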